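/- arXiv:0912.3609 — 10 statements merged into one kernel-verified Lean document; each statement's English description precedes it below -/
import Mathlib

section
/- For every nonnegative integer s, v_{2s+1} - 2 = m·(u_s + u_{s+1})², where u and v satisfy the recurrences u_0 = 0, u_1 = 1, v_0 = 2, v_1 = m+2, and x_p = (m+2)x_{p-1} - x_{p-2}. -/
/-- For every nonnegative integer `s`, `v (2s+1) - 2 = m * (u s + u (s+1))²`. -/
theorem stmt6 (m : ℕ) (hm : 1 ≤ m) (u v : ℕ → ℤ)
    (hu0 : u 0 = 0) (hu1 : u 1 = 1)
    (hurec : ∀ p, 2 ≤ p → u p = (m + 2) * u (p - 1) - u (p - 2))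
    (hv0 : v 0 = 2) (hv1 : v 1 = m + 2)
    (hvrec : ∀ p, 2 ≤ p → v p = (m + 2) * v (p - 1) - v (p - 2)) :
    ∀ s : ℕ, v (2 * s + 1) - 2 = m * (u s + u (s + 1)) ^ 2 := by
  have hu2 : ∀ s, u (s + 2) = (m + 2) * u (s + 1) - u s := by
    intro s
    have := hurec (s + 2) (by omega)
    simpa using this
  have hv2 : ∀ p, v (p + 2) = (m + 2) * v (p + 1) - v p := by
    intro p
    have := hvrec (p + 2) (by omega)
    simpa using this
  have hinv : ∀ s, u (s + 1) ^ 2 + u s ^ 2 - (m + 2) * u s * u (s + 1) = 1 := by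
    intro s
    induction s with
    | zero => rw [hu0, hu1]; ring
    | succ n ih =>
      rw [hu2 n]
      linear_combination ih
  have key : ∀ s, (v (2 * s + 1) - 2 = m * (u s + u (s + 1)) ^ 2) ∧
      (v (2 * s + 2) - 2 = m * (m + 4) * u (s + 1) ^ 2) := by
    intro s
    induction s with
    | zero =>
      constructor
      · rw [hu0, hu1]
        rw [show 2 * 0 + 1 = 1 from rfl, hv1]; ring
      · have h2 : v 2 = (m + 2) * v 1 - v 0 := hv2 0
        rw [show 2 * 0 + 2 = 2 from rfl, h2, hv0, hv1, hu1]; ring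
    | succ n ih =>
      have g1 : v (2 * (n + 1) + 1) - 2 = m * (u (n + 1) + u (n + 1 + 1)) ^ 2 := by
        have e : 2 * (n + 1) + 1 = (2 * n + 1) + 2 := by ring
        rw [e, hv2 (2 * n + 1), show 2 * n + 1 + 1 = 2 * n + 2 from rfl, hu2 n]
        linear_combination ((m : ℤ) + 2) * ih.2 - ih.1 - 2 * m * (hinv n)
      refine ⟨g1, ?_⟩
      have e : 2 * (n + 1) + 2 = (2 * n + 2) + 2 := by ring
      rw [e, hv2 (2 * n + 2), show 2 * n + 2 + 1 = 2 * (n + 1) + 1 from rfl]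
      linear_combination ((m : ℤ) + 2) * g1 - ih.2 - 2 * m * (hinv (n + 1))
  exact fun s => (key s).1
end

section
/- For every nonnegative integer s, v_{2s} - 2 = m·(m+4)·u_s², where u and v satisfy the recurrences u_0 = 0, u_1 = 1, v_0 = 2, v_1 = m+2, and x_p = (m+2)x_{p-1} - x_{p-2}. -/
/-- For every nonnegative integer `s`, `v (2s) - 2 = m * (m+4) * (u s)²`. -/
theorem stmt7 (m : ℕ) (hm : 1 ≤ m) (u v : ℕ → ℤ)
    (hu0 : u 0 = 0) (hu1 : u 1 = 1)
    (hurec : ∀ p, 2 ≤ p → u p = (m + 2) * u (p - 1) - u (p - 2))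
    (hv0 : v 0 = 2) (hv1 : v 1 = m + 2)
    (hvrec : ∀ p, 2 ≤ p → v p = (m + 2) * v (p - 1) - v (p - 2)) :
    ∀ s : ℕ, v (2 * s) - 2 = m * (m + 4) * (u s) ^ 2 := by
  have hu : ∀ s : ℕ, u (s + 2) = (m + 2) * u (s + 1) - u s := by
    intro s
    have h := hurec (s + 2) (by omega)
    simpa using h
  have hv : ∀ s : ℕ, v (s + 2) = (m + 2) * v (s + 1) - v s := by
    intro s
    have h := hvrec (s + 2) (by omega)
    simpa using h
  have hcat : ∀ s : ℕ, u s * u (s + 2) = u (s + 1) ^ 2 - 1 := by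
    intro s
    induction s with
    | zero => rw [hu 0, hu0, hu1]; ring
    | succ n ih =>
      rw [hu (n + 1)]
      linear_combination ih - u (n + 2) * hu n
  have key : ∀ s : ℕ, v (2 * s) - 2 = m * (m + 4) * (u s) ^ 2 ∧
      v (2 * s + 1) - (m + 2) = m * (m + 4) * (u s * u (s + 1)) := by
    intro s
    induction s with
    | zero => simp [hv0, hv1, hu0]
    | succ n ih =>
      obtain ⟨h1, h2⟩ := ih
      have e1 : 2 * (n + 1) = 2 * n + 2 := by ring
      have e2 : 2 * (n + 1) + 1 = (2 * n + 1) + 2 := by ring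
      have h3 : v (2 * (n + 1)) - 2 = m * (m + 4) * (u (n + 1)) ^ 2 := by
        rw [e1, hv (2 * n)]
        linear_combination (m + 2 : ℤ) * h2 - h1 + (m : ℤ) * (m + 4) * hcat n -
          (m : ℤ) * (m + 4) * u n * hu n
      refine ⟨h3, ?_⟩
      rw [e2, hv (2 * n + 1)]
      have e3 : 2 * n + 1 + 1 = 2 * (n + 1) := by ring
      rw [e3]
      linear_combination (m + 2 : ℤ) * h3 - h2 - (m : ℤ) * (m + 4) * u (n + 1) * hu n
  exact fun s => (key s).1
end

section
/- For every nonnegative integer s, gcd(u_{2s+2} - 1, u_{2s+1}) = u_s + u_{s+1}. -/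
/-- For every nonnegative integer `s`, `gcd (u (2s+2) - 1) (u (2s+1)) = u s + u (s+1)`. -/
theorem stmt9 (m : ℕ) (hm : 1 ≤ m) (u : ℕ → ℤ)
    (hu0 : u 0 = 0) (hu1 : u 1 = 1)
    (hurec : ∀ p, 2 ≤ p → u p = (m + 2) * u (p - 1) - u (p - 2)) :
    ∀ s : ℕ, (Int.gcd (u (2 * s + 2) - 1) (u (2 * s + 1)) : ℤ) = u s + u (s + 1) := by
  have hrec : ∀ p, u (p + 2) = (m + 2) * u (p + 1) - u p := by
    intro p
    simpa using hurec (p + 2) (by omega)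
  -- growth
  have hpos : ∀ p : ℕ, (p : ℤ) ≤ u p ∧ u p + 1 ≤ u (p + 1) := by
    intro p
    induction p with
    | zero => constructor <;> simp [hu0, hu1]
    | succ n ih =>
      obtain ⟨h1, h2⟩ := ih
      have h3 : u (n + 1 + 1) = (m + 2) * u (n + 1) - u n := hrec n
      have hm0 : (0 : ℤ) ≤ (m : ℤ) := by positivity
      have hn0 : (0 : ℤ) ≤ (n : ℤ) := by positivity
      constructor
      · push_cast; linarith
      · nlinarith
  -- invariant
  have hinv : ∀ p, u (p + 1) ^ 2 - (m + 2) * u p * u (p + 1) + u p ^ 2 = 1 := by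
    intro p
    induction p with
    | zero => simp [hu0, hu1]
    | succ n ih =>
      have h3 : u (n + 1 + 1) = (m + 2) * u (n + 1) - u n := hrec n
      rw [h3]
      linear_combination ih
  -- doubling
  have hdbl : ∀ s : ℕ, u (2 * s + 1) = u (s + 1) ^ 2 - u s ^ 2 ∧
      u (2 * s + 2) = (m + 2) * u (s + 1) ^ 2 - 2 * u s * u (s + 1) := by
    intro s
    induction s with
    | zero =>
      constructor
      · norm_num [hu0, hu1]
      · have := hrec 0
        norm_num [hu0, hu1] at this ⊢
        linarith
    | succ n ih =>
      obtain ⟨ih1, ih2⟩ := ih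
      have e1 : 2 * (n + 1) + 1 = (2 * n + 1) + 2 := by ring
      have e2 : 2 * (n + 1) + 2 = (2 * n + 2) + 2 := by ring
      have e3 : (2 * n + 2) = (2 * n + 1) + 1 := by ring
      have hA : u ((2 * n + 1) + 2) = (m + 2) * u (2 * n + 2) - u (2 * n + 1) := by
        have := hrec (2 * n + 1); rwa [← e3] at this
      have hB : u ((2 * n + 2) + 2) = (m + 2) * u ((2 * n + 2) + 1) - u (2 * n + 2) := hrec (2 * n + 2)
      have e4 : (2 * n + 2) + 1 = (2 * n + 1) + 2 := by ring
      rw [e4, hA] at hB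
      have hn1 : u (n + 1 + 1) = (m + 2) * u (n + 1) - u n := hrec n
      constructor
      · rw [e1, hA, ih1, ih2, hn1]; ring
      · rw [e2, hB, ih1, ih2, hn1]; ring
  intro s
  obtain ⟨hd1, hd2⟩ := hdbl s
  have hinvs : u (s + 1) ^ 2 - (m + 2) * u s * u (s + 1) + u s ^ 2 = 1 := hinv s
  have hx : u (2 * s + 2) - 1 = (u (s + 1) + u s) * ((m + 1) * u (s + 1) - u s) := by
    rw [hd2]; linear_combination hinvs
  have hy : u (2 * s + 1) = (u (s + 1) + u s) * (u (s + 1) - u s) := by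
    rw [hd1]; ring
  have hcop : Int.gcd ((m + 1) * u (s + 1) - u s) (u (s + 1) - u s) = 1 := by
    rw [← Int.isCoprime_iff_gcd_eq_one]
    exact ⟨-u s, u (s + 1), by linear_combination hinvs⟩
  have hnn : 0 ≤ u (s + 1) + u s := by
    obtain ⟨h1, h2⟩ := hpos s
    have : (0 : ℤ) ≤ (s : ℤ) := by positivity
    linarith
  rw [hx, hy, Int.gcd_mul_left, hcop]
  simp [Int.natAbs_of_nonneg hnn]
  linarith
end

section
/- For every nonnegative integer s, gcd(u_{2s+1} - 1, u_{2s}) = gcd(m, 2)·u_s. -/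
/-- For every nonnegative integer `s`, `gcd (u (2s+1) - 1) (u (2s)) = gcd(m,2) * u s`. -/
theorem stmt10 (m : ℕ) (hm : 1 ≤ m) (u : ℕ → ℤ)
    (hu0 : u 0 = 0) (hu1 : u 1 = 1)
    (hurec : ∀ p, 2 ≤ p → u p = (m + 2) * u (p - 1) - u (p - 2)) :
    ∀ s : ℕ, (Int.gcd (u (2 * s + 1) - 1) (u (2 * s)) : ℤ) = (Nat.gcd m 2 : ℤ) * u s := by
  set c : ℤ := (m : ℤ) + 2 with hc
  have h2 : ∀ n : ℕ, u (n + 2) = c * u (n + 1) - u n := by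
    intro n
    have h := hurec (n + 2) (by omega)
    simpa [hc] using h
  -- Cassini-type identity
  have cass : ∀ s : ℕ, u (s+1)^2 - c * u s * u (s+1) + u s ^ 2 = 1 := by
    intro s
    induction s with
    | zero => simp [hu0, hu1]
    | succ n ih =>
      rw [h2 n]
      ring_nf
      ring_nf at ih
      linarith
  -- doubling identities
  have dbl : ∀ s : ℕ, u (2*s) = u s * (2 * u (s+1) - c * u s) ∧
      u (2*s+1) = u s * (c * u (s+1) - 2 * u s) + 1 := by
    intro s
    induction s with
    | zero => simp [hu0, hu1]
    | succ n ih =>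
      obtain ⟨ih1, ih2⟩ := ih
      have hC := cass n
      have hb : u (n+1+1) = c * u (n+1) - u n := h2 n
      have hd : u (2*(n+1)) = u (n+1) * (2 * u (n+1+1) - c * u (n+1)) := by
        have e1 : 2*(n+1) = 2*n+2 := by ring
        rw [e1, h2 (2*n), ih1, ih2, hb]
        linear_combination (-c) * hC
      refine ⟨hd, ?_⟩
      have e2 : 2*(n+1)+1 = 2*n+1+2 := by ring
      have hd' : u (2*n+1+1) = u (n+1) * (2 * u (n+1+1) - c * u (n+1)) := by
        have e1 : 2*(n+1) = 2*n+1+1 := by ring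
        rw [← e1]; exact hd
      rw [e2, h2 (2*n+1), hd', ih2, hb]
      linear_combination 2 * hC
  -- nonnegativity
  have pos : ∀ s : ℕ, 0 ≤ u s ∧ u s ≤ u (s+1) := by
    intro s
    induction s with
    | zero => simp [hu0, hu1]
    | succ n ih =>
      obtain ⟨h0, h1⟩ := ih
      refine ⟨le_trans h0 h1, ?_⟩
      rw [h2 n]
      have hm3 : (3:ℤ) ≤ c := by
        have : (1:ℤ) ≤ (m:ℤ) := by exact_mod_cast hm
        simp [hc]; linarith
      nlinarith
  intro s
  set A : ℤ := c * u (s+1) - 2 * u s with hA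
  set B : ℤ := 2 * u (s+1) - c * u s with hB
  have e1 : u (2*s+1) - 1 = u s * A := by
    have := (dbl s).2; rw [this]; ring
  have e2 : u (2*s) = u s * B := (dbl s).1
  -- key Bezout relation
  have bez : u (s+1) * B - u s * A = 2 := by
    have := cass s
    rw [hA, hB]
    nlinarith [this]
  have hgcd2 : Int.gcd A B ∣ 2 := by
    have hdA : (↑(Int.gcd A B) : ℤ) ∣ A := Int.gcd_dvd_left A B
    have hdB : (↑(Int.gcd A B) : ℤ) ∣ B := Int.gcd_dvd_right A B
    have : (↑(Int.gcd A B) : ℤ) ∣ 2 := by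
      rw [← bez]
      exact dvd_sub (hdB.mul_left _) (hdA.mul_left _)
    exact_mod_cast this
  have hgcdval : Int.gcd A B = Nat.gcd m 2 := by
    rcases Nat.even_or_odd m with he | ho
    · -- m even : gcd = 2
      obtain ⟨k, hk⟩ := he
      have hmg : Nat.gcd m 2 = 2 :=
        Nat.dvd_antisymm (Nat.gcd_dvd_right m 2) (Nat.dvd_gcd ⟨k, by omega⟩ dvd_rfl)
      rw [hmg]
      have hmz : (m:ℤ) = k + k := by exact_mod_cast hk
      have h2A : (2:ℤ) ∣ A := by
        refine ⟨(k:ℤ) * u (s+1) + u (s+1) - u s, ?_⟩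
        rw [hA, hc, hmz]; ring
      have h2B : (2:ℤ) ∣ B := by
        refine ⟨u (s+1) - (k:ℤ) * u s - u s, ?_⟩
        rw [hB, hc, hmz]; ring
      have h2g : 2 ∣ Int.gcd A B := by
        have := Int.dvd_gcd h2A h2B
        exact_mod_cast this
      exact Nat.dvd_antisymm hgcd2 h2g
    · -- m odd : gcd = 1
      obtain ⟨k, hk⟩ := ho
      have hmg : Nat.gcd m 2 = 1 := by
        have hd2 := Nat.gcd_dvd_right m 2
        have hdm := Nat.gcd_dvd_left m 2
        rcases (Nat.dvd_prime Nat.prime_two).mp hd2 with h | h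
        · exact h
        · exfalso; rw [h] at hdm; omega
      rw [hmg]
      rcases (Nat.dvd_prime Nat.prime_two).mp hgcd2 with h1 | h1
      · exact h1
      · exfalso
        have h2A : (2:ℤ) ∣ A := by
          have := (Int.gcd_dvd_left A B : (↑(Int.gcd A B):ℤ) ∣ A)
          rw [h1] at this; exact_mod_cast this
        have h2B : (2:ℤ) ∣ B := by
          have := (Int.gcd_dvd_right A B : (↑(Int.gcd A B):ℤ) ∣ B)
          rw [h1] at this; exact_mod_cast this
        have hcodd : ¬ (2:ℤ) ∣ c := by
          intro hdvd
          rw [hc] at hdvd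
          have : (2:ℕ) ∣ m + 2 := by exact_mod_cast hdvd
          omega
        have hdc1 : (2:ℤ) ∣ c * u (s+1) := by
          have h : c * u (s+1) = A + 2 * u s := by rw [hA]; ring
          rw [h]; exact dvd_add h2A ⟨u s, by ring⟩
        have hdc2 : (2:ℤ) ∣ c * u s := by
          have h : c * u s = 2 * u (s+1) - B := by rw [hB]; ring
          rw [h]; exact dvd_sub ⟨u (s+1), by ring⟩ h2B
        have hu1d : (2:ℤ) ∣ u (s+1) :=
          (Int.prime_two.dvd_mul.mp hdc1).resolve_left hcodd
        have hu0d : (2:ℤ) ∣ u s :=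
          (Int.prime_two.dvd_mul.mp hdc2).resolve_left hcodd
        have : (2:ℤ) ∣ 1 := by
          rw [← cass s]
          exact dvd_add (dvd_sub (dvd_pow hu1d two_ne_zero)
            ((hu1d.mul_left _))) (dvd_pow hu0d two_ne_zero)
        norm_num at this
  rw [e1, e2, Int.gcd_mul_left, hgcdval]
  have hnn : ((u s).natAbs : ℤ) = u s := Int.natAbs_of_nonneg (pos s).1
  push_cast [hnn]
  ring
end

section
/- The 2×2 integer matrix W with entries W = [[u_{n-1}+1, u_n],[u_n, u_{n+1}-1]] has determinant v_n - 2; in particular for n = 2s+1, det W = m·(u_s + u_{s+1})², and for n = 2s, det W = m(m+4)·u_s². -/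
/-- The matrix `W = [[u (n-1) + 1, u n], [u n, u (n+1) - 1]]` has determinant
`v n - 2`; in particular `det W = m * (u s + u (s+1))²` when `n = 2s+1`, and
`det W = m * (m+4) * (u s)²` when `n = 2s`. -/
theorem stmt12 (m n : ℕ) (hm : 1 ≤ m) (hn : 2 ≤ n) (u v : ℕ → ℤ)
    (hu0 : u 0 = 0) (hu1 : u 1 = 1)
    (hurec : ∀ p, 2 ≤ p → u p = (m + 2) * u (p - 1) - u (p - 2))
    (hv0 : v 0 = 2) (hv1 : v 1 = m + 2)
    (hvrec : ∀ p, 2 ≤ p → v p = (m + 2) * v (p - 1) - v (p - 2)) :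
    (!![u (n - 1) + 1, u n; u n, u (n + 1) - 1] : Matrix (Fin 2) (Fin 2) ℤ).det
        = v n - 2 ∧
      (∀ s : ℕ, n = 2 * s + 1 →
        (!![u (n - 1) + 1, u n; u n, u (n + 1) - 1] : Matrix (Fin 2) (Fin 2) ℤ).det
          = m * (u s + u (s + 1)) ^ 2) ∧
      (∀ s : ℕ, n = 2 * s →
        (!![u (n - 1) + 1, u n; u n, u (n + 1) - 1] : Matrix (Fin 2) (Fin 2) ℤ).det
          = m * (m + 4) * (u s) ^ 2) := by
  have hrec : ∀ p, u (p + 2) = (m + 2) * u (p + 1) - u p := by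
    intro p
    have h := hurec (p + 2) (by omega)
    simpa using h
  have hvrec' : ∀ p, v (p + 2) = (m + 2) * v (p + 1) - v p := by
    intro p
    have h := hvrec (p + 2) (by omega)
    simpa using h
  have cass : ∀ p, u (p + 1) ^ 2 - u p * u (p + 2) = 1 := by
    intro p
    induction p with
    | zero => rw [hrec 0, hu0, hu1]; ring
    | succ q ih =>
      have h2 := hrec q
      have h3 := hrec (q + 1)
      linear_combination ih - u (q + 1) * h3 + u (q + 2) * h2
  have hv : ∀ p, v (p + 1) = u (p + 2) - u p ∧ v (p + 2) = u (p + 3) - u (p + 1) := by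
    intro p
    induction p with
    | zero =>
      constructor
      · rw [hv1, hrec 0, hu0, hu1]; ring
      · rw [hvrec' 0, hv0, hv1, hrec 1, hrec 0, hu0, hu1]; ring
    | succ q ih =>
      obtain ⟨ih1, ih2⟩ := ih
      refine ⟨ih2, ?_⟩
      linear_combination hvrec' (q + 1) + (m + 2) * ih2 - ih1 - hrec (q + 2) + hrec q
  have dbl : ∀ s, u (2 * s + 1) = u (s + 1) ^ 2 - u s ^ 2 ∧
      u (2 * s + 2) = u (s + 1) * u (s + 2) - u s * u (s + 1) := by
    intro s
    induction s with
    | zero => norm_num; rw [hu0, hu1]; constructor <;> ring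
    | succ t ih =>
      obtain ⟨ih1, ih2⟩ := ih
      have h2 := hrec t
      have h3 := hrec (t + 1)
      have e1 : 2 * (t + 1) + 1 = 2 * t + 1 + 2 := by ring
      have e2 : 2 * (t + 1) + 2 = 2 * t + 2 + 2 := by ring
      have q1 : u (2 * (t + 1) + 1) = u (t + 2) ^ 2 - u (t + 1) ^ 2 := by
        rw [e1]
        linear_combination hrec (2 * t + 1) + (m + 2) * ih2 - ih1 - (u (t + 2) - u t) * h2
      refine ⟨q1, ?_⟩
      rw [e2]
      have q1' : u (2 * t + 1 + 2) = u (t + 2) ^ 2 - u (t + 1) ^ 2 := by rw [← e1]; exact q1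
      linear_combination hrec (2 * t + 2) + (m + 2) * q1' - ih2 - u (t + 2) * h3 + u (t + 1) * h2
  obtain ⟨k, rfl⟩ : ∃ k, n = k + 2 := ⟨n - 2, by omega⟩
  have hdet : (!![u (k + 2 - 1) + 1, u (k + 2); u (k + 2), u (k + 2 + 1) - 1] :
      Matrix (Fin 2) (Fin 2) ℤ).det = v (k + 2) - 2 := by
    simp only [Matrix.det_fin_two_of, show k + 2 - 1 = k + 1 from rfl]
    linear_combination -(hv (k + 1)).1 - cass (k + 1)
  refine ⟨hdet, ?_, ?_⟩
  · intro s hs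
    obtain ⟨t, rfl⟩ : ∃ t, s = t + 1 := ⟨s - 1, by omega⟩
    have hk : k = 2 * t + 1 := by omega
    subst hk
    rw [hdet]
    have h1 := (dbl (t + 1)).2
    have h2 := (dbl t).2
    have hv1' := (hv (2 * t + 2)).1
    have hc := cass (t + 1)
    have hr2 := hrec t
    have hr3 := hrec (t + 1)
    have e1 : 2 * (t + 1) + 2 = 2 * t + 2 + 2 := by ring
    rw [e1] at h1
    have e2 : 2 * t + 1 + 2 = 2 * t + 2 + 1 := by ring
    rw [show (2:ℕ) * t + 2 + 2 = 2 * t + 2 + 2 from rfl] at hv1'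
    linear_combination hv1' + h1 - h2 + 2 * hc + (u (t + 2) + 2 * u (t + 1)) * hr3 + u (t + 1) * hr2
  · intro s hs
    obtain ⟨t, rfl⟩ : ∃ t, s = t + 1 := ⟨s - 1, by omega⟩
    have hk : k = 2 * t := by omega
    subst hk
    rw [hdet]
    have h1 := (dbl (t + 1)).1
    have h2 := (dbl t).1
    have hv1' := (hv (2 * t + 1)).1
    have hc := cass t
    have hr2 := hrec t
    have e1 : 2 * (t + 1) + 1 = 2 * t + 1 + 2 := by ring
    rw [e1] at h1
    linear_combination hv1' + h1 - h2 + 2 * hc + (u (t + 2) + (m + 2) * u (t + 1) + u t) * hr2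
end

section
/- Let n = 2s+1 and W = [[u_{n-1}+1, u_n],[u_n, u_{n+1}-1]]. Then the Smith normal form of W is diag(h_s, m·h_s), where h_s = u_s + u_{s+1}; i.e., the first invariant factor (gcd of the entries of W) equals h_s and the determinant equals m·h_s². -/
/-- For `n = 2s+1`, the Smith normal form of `W = [[u (n-1)+1, u n],[u n, u (n+1)-1]]`
is `diag(h_s, m·h_s)` with `h_s = u s + u (s+1)`: the gcd of the entries of `W`
equals `h_s` and the determinant equals `m·h_s²`. -/
theorem stmt13 (m s : ℕ) (hm : 1 ≤ m) (hs : 1 ≤ s) (n : ℕ) (hn : n = 2 * s + 1)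
    (u : ℕ → ℤ)
    (hu0 : u 0 = 0) (hu1 : u 1 = 1)
    (hurec : ∀ p, 2 ≤ p → u p = (m + 2) * u (p - 1) - u (p - 2)) :
    (Int.gcd (Int.gcd (u (n - 1) + 1) (u n)) (u (n + 1) - 1) : ℤ)
        = u s + u (s + 1) ∧
      (!![u (n - 1) + 1, u n; u n, u (n + 1) - 1] : Matrix (Fin 2) (Fin 2) ℤ).det
        = m * (u s + u (s + 1)) ^ 2 := by
  subst hn
  have hm' : (1 : ℤ) ≤ (m : ℤ) := by exact_mod_cast hm
  have hrec : ∀ p : ℕ, u (p + 2) = ((m : ℤ) + 2) * u (p + 1) - u p := by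
    intro p
    have h := hurec (p + 2) (by omega)
    rw [show p + 2 - 1 = p + 1 from by omega, show p + 2 - 2 = p from by omega] at h
    exact_mod_cast h
  -- positivity / monotonicity
  have hpos : ∀ p, 0 ≤ u p ∧ u p + 1 ≤ u (p + 1) := by
    intro p
    induction p with
    | zero => simp [hu0, hu1]
    | succ q ih =>
      have h2 : u (q + 1 + 1) = ((m : ℤ) + 2) * u (q + 1) - u q := hrec q
      refine ⟨by linarith [ih.1, ih.2], ?_⟩
      rw [h2]
      nlinarith [ih.1, ih.2, hm']
  -- invariant
  have hQ : ∀ p, u p ^ 2 + u (p + 1) ^ 2 - ((m : ℤ) + 2) * u p * u (p + 1) = 1 := by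
    intro p
    induction p with
    | zero => simp [hu0, hu1]
    | succ q ih =>
      have h2 : u (q + 1 + 1) = ((m : ℤ) + 2) * u (q + 1) - u q := hrec q
      rw [h2]
      linear_combination ih
  -- addition formula
  have hF : ∀ q p, u (p + q + 1) = u (p + 1) * u (q + 1) - u p * u q := by
    intro q
    induction q with
    | zero => intro p; simp [hu0, hu1]
    | succ q ih =>
      intro p
      rw [show p + (q + 1) + 1 = (p + 1) + q + 1 from by omega, ih (p + 1)]
      have hp2 : u (p + 1 + 1) = ((m : ℤ) + 2) * u (p + 1) - u p := hrec p
      have hq2 : u (q + 1 + 1) = ((m : ℤ) + 2) * u (q + 1) - u q := hrec q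
      rw [hp2, hq2]; ring
  set a := u s with ha
  set b := u (s + 1) with hb
  have hQs : a ^ 2 + b ^ 2 - ((m : ℤ) + 2) * a * b = 1 := hQ s
  have hsm1 : u (s - 1) = ((m : ℤ) + 2) * a - b := by
    have h := hrec (s - 1)
    rw [show s - 1 + 2 = s + 1 from by omega, show s - 1 + 1 = s from by omega] at h
    rw [← hb] at h; linarith
  have hsp2 : u (s + 2) = ((m : ℤ) + 2) * b - a := hrec s
  have hE1 : u (2 * s) + 1 = (a + b) * (b - ((m : ℤ) + 1) * a) := by
    have h := hF s (s - 1)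
    rw [show s - 1 + s + 1 = 2 * s from by omega, show s - 1 + 1 = s from by omega,
      hsm1] at h
    rw [← ha, ← hb] at h
    rw [h]; linear_combination -hQs
  have hE2 : u (2 * s + 1) = (a + b) * (b - a) := by
    have h := hF s s
    rw [show s + s + 1 = 2 * s + 1 from by omega] at h
    rw [← ha, ← hb] at h
    rw [h]; ring
  have hE3 : u (2 * s + 2) - 1 = (a + b) * (((m : ℤ) + 1) * b - a) := by
    have h := hF (s + 1) s
    rw [show s + (s + 1) + 1 = 2 * s + 2 from by omega, hsp2] at h
    rw [← ha, ← hb] at h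
    rw [h]; linear_combination hQs
  have hab : (0 : ℤ) < a + b := by
    have h1 := (hpos s).1
    have h2 := (hpos s).2
    rw [← ha] at h1; rw [← ha, ← hb] at h2
    linarith
  have hce : Int.gcd (b - ((m : ℤ) + 1) * a) (b - a) = 1 := by
    rw [← Int.isCoprime_iff_gcd_eq_one]
    exact ⟨b, -a, by linear_combination hQs⟩
  simp only [show 2 * s + 1 - 1 = 2 * s from by omega,
    show 2 * s + 1 + 1 = 2 * s + 2 from by omega]
  rw [hE1, hE2, hE3]
  constructor
  · rw [Int.gcd_mul_left, hce, mul_one, Int.natCast_natAbs,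
      abs_of_nonneg (le_of_lt hab),
      Int.gcd_eq_left (le_of_lt hab) (dvd_mul_right _ _)]
  · rw [Matrix.det_fin_two_of]
    linear_combination ((m : ℤ) * (a + b) ^ 2) * hQs
end

section
/- Let n = 2s and W = [[u_{n-1}+1, u_n],[u_n, u_{n+1}-1]]. Then the Smith normal form of W is diag(gcd(m,2)·u_s, m(m+4)·u_s/gcd(m,2)); i.e., the gcd of the entries of W equals gcd(m,2)·u_s and the determinant equals m(m+4)·u_s². -/
/-- For `n = 2s`, the Smith normal form of `W = [[u (n-1)+1, u n],[u n, u (n+1)-1]]`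
is `diag(gcd(m,2)·u_s, m(m+4)·u_s / gcd(m,2))`: the gcd of the entries of `W`
equals `gcd(m,2)·u_s` and the determinant equals `m(m+4)·u_s²`. -/
theorem stmt14 (m s : ℕ) (hm : 1 ≤ m) (hs : 1 ≤ s) (n : ℕ) (hn : n = 2 * s)
    (u : ℕ → ℤ)
    (hu0 : u 0 = 0) (hu1 : u 1 = 1)
    (hurec : ∀ p, 2 ≤ p → u p = (m + 2) * u (p - 1) - u (p - 2)) :
    (Int.gcd (Int.gcd (u (n - 1) + 1) (u n)) (u (n + 1) - 1) : ℤ)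
        = (Nat.gcd m 2 : ℤ) * u s ∧
      (!![u (n - 1) + 1, u n; u n, u (n + 1) - 1] : Matrix (Fin 2) (Fin 2) ℤ).det
        = m * (m + 4) * (u s) ^ 2 := by
  set K : ℤ := (m:ℤ) + 2 with hK
  have hrec2 : ∀ p : ℕ, u (p+2) = K * u (p+1) - u p := by
    intro p
    have h := hurec (p+2) (by omega)
    simpa using h
  have hu2 : u 2 = K := by have := hrec2 0; simp [hu0, hu1] at this; simpa using this
  have hL1 : ∀ p, u (p+2) * u p = u (p+1)^2 - 1 := by
    intro p
    induction p with
    | zero => simp [hrec2 0, hu0, hu1]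
    | succ q ih =>
      have h1 := hrec2 q
      have h2 := hrec2 (q+1)
      have e : q + 1 + 1 = q + 2 := rfl
      rw [e] at h2 ⊢
      have e2 : q + 1 + 2 = q + 3 := rfl
      rw [e2] at h2 ⊢
      linear_combination u (q+1) * h2 - u (q+2) * h1 + ih
  have hadd : ∀ q p, u (p+1+q) = u (p+1) * u (q+1) - u p * u q := by
    have key : ∀ q, (∀ p, u (p+1+q) = u (p+1) * u (q+1) - u p * u q) ∧
        (∀ p, u (p+1+(q+1)) = u (p+1) * u (q+2) - u p * u (q+1)) := by
      intro q
      induction q with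
      | zero =>
        constructor
        · intro p; simp [hu0, hu1]
        · intro p
          have h := hrec2 p
          have e : p + 1 + (0+1) = p + 2 := by omega
          rw [e]
          rw [hu2, hu1]
          linarith [h]
      | succ q ih =>
        refine ⟨ih.2, ?_⟩
        intro p
        have h := hrec2 (p+1+q)
        have h3 := hrec2 (q+1)
        have h4 := hrec2 q
        have ih2 := ih.2 p
        have ih1 := ih.1 p
        have e1 : p + 1 + (q+1+1) = p+1+q+2 := by omega
        have e2 : p + 1 + (q+1) = p+1+q+1 := by omega
        have e3 : q + 1 + 1 = q + 2 := by omega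
        have e4 : q + 1 + 2 = q + 3 := by omega
        rw [e1, e3, e4]
        rw [e2] at ih2
        linear_combination h + K * ih2 - ih1 - u (p+1) * h3 + u p * h4
    intro q; exact (key q).1
  have hpos : ∀ p, 1 ≤ u (p+1) ∧ u (p+1) ≤ u (p+2) := by
    intro p
    induction p with
    | zero => refine ⟨by simp [hu1], ?_⟩; rw [hu1, hu2]; omega
    | succ q ih =>
      have h := hrec2 (q+1)
      have e : q + 1 + 1 = q + 2 := rfl
      have e2 : q + 1 + 2 = q + 3 := rfl
      rw [e, e2] at h ⊢
      have hK3 : 3 ≤ K := by rw [hK]; exact_mod_cast by omega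
      constructor
      · linarith [ih.1, ih.2]
      · nlinarith [ih.1, ih.2]
  have hpar : 2 ∣ m → ∀ p, (2:ℤ) ∣ (u p - p) := by
    intro hme
    have hKe : (2:ℤ) ∣ K := by
      obtain ⟨r, rfl⟩ := hme
      exact ⟨(r:ℤ)+1, by rw [hK]; push_cast; ring⟩
    have key : ∀ p, (2:ℤ) ∣ (u p - p) ∧ (2:ℤ) ∣ (u (p+1) - (p+1)) := by
      intro p
      induction p with
      | zero => simp [hu0, hu1]
      | succ q ih =>
        refine ⟨ih.2, ?_⟩
        have h := hrec2 q
        obtain ⟨w, hw⟩ := ih.1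
        obtain ⟨k', hk'⟩ := hKe
        refine ⟨k' * u (q+1) - w - q - 1, ?_⟩
        push_cast
        linear_combination h - hw + u (q+1) * hk'
    intro p; exact (key p).1
  -- main part
  obtain ⟨t, rfl⟩ : ∃ t, s = t + 1 := ⟨s - 1, by omega⟩
  subst hn
  have h1 : u (t+2) = K * u (t+1) - u t := hrec2 t
  have h2 : u (t+2) * u t = u (t+1)^2 - 1 := hL1 t
  have hb1 : 1 ≤ u (t+1) := (hpos t).1
  have en1 : 2*(t+1) - 1 = t+1+t := by omega
  have en2 : 2*(t+1) = t+1+(t+1) := by omega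
  have en3 : 2*(t+1)+1 = t+1+1+(t+1) := by omega
  have e1 : u (2*(t+1) - 1) = u (t+1) * u (t+1) - u t * u t := by
    rw [en1]; exact hadd t t
  have e2 : u (2*(t+1)) = u (t+1) * u (t+2) - u t * u (t+1) := by
    rw [en2]; have := hadd (t+1) t
    have e : t + 1 + 1 = t + 2 := rfl
    rw [e] at this; exact this
  have e3 : u (2*(t+1)+1) = u (t+2) * u (t+2) - u (t+1) * u (t+1) := by
    rw [en3]; have := hadd (t+1) (t+1)
    have e : t + 1 + 1 = t + 2 := rfl
    rw [e] at this; exact this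
  have fE1 : u (2*(t+1) - 1) + 1 = u (t+1) * (2 * u (t+1) - K * u t) := by
    linear_combination e1 - u t * h1 + h2
  have fE2 : u (2*(t+1)) = u (t+1) * (K * u (t+1) - 2 * u t) := by
    linear_combination e2 + u (t+1) * h1
  have fE3 : u (2*(t+1)+1) - 1 = u (t+1) * (K * u (t+2) - 2 * u (t+1)) := by
    linear_combination e3 + u (t+2) * h1 - h2
  set a := u t with ha
  set b := u (t+1) with hb
  set c := u (t+2) with hc
  set A : ℤ := 2 * b - K * a with hA
  set B : ℤ := K * b - 2 * a with hB
  set A' : ℤ := K * c - 2 * b with hA'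
  have pA : A^2 - (K^2-4) * a^2 = 4 := by rw [hA]; linear_combination (4*a) * h1 - 4 * h2
  have pB : B^2 - (K^2-4) * b^2 = 4 := by rw [hB]; linear_combination (4*a) * h1 - 4 * h2
  have relE3 : A' = K * B - A := by rw [hA', hB, hA]; linear_combination K * h1
  set γ : ℕ := Int.gcd A B with hγ
  have hγA : (γ:ℤ) ∣ A := Int.gcd_dvd_left A B
  have hγB : (γ:ℤ) ∣ B := Int.gcd_dvd_right A B
  have hγ4 : γ ∣ 4 := by
    have hd : (γ:ℤ) ∣ B * B - (K * B - 2 * A) * b :=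
      dvd_sub (hγB.mul_left B) ((dvd_sub (hγB.mul_left K) (hγA.mul_left 2)).mul_right b)
    have : B * B - (K * B - 2 * A) * b = 4 := by linear_combination pB
    rw [this] at hd
    exact_mod_cast hd
  have hco : ∀ x : ℤ, x ∣ a → x ∣ b → x ∣ 1 := by
    intro x hxa hxb
    have : x ∣ b^2 - c * a := dvd_sub (by exact (hxb.mul_left b).trans (by rw [sq]))
      (hxa.mul_left c)
    calc x ∣ b^2 - c * a := this
      _ = 1 := by linear_combination -h2
  have hdA : ((Nat.gcd m 2 : ℕ):ℤ) ∣ A := by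
    have hdm : ((Nat.gcd m 2 : ℕ):ℤ) ∣ (m:ℤ) := Int.natCast_dvd_natCast.2 (Nat.gcd_dvd_left m 2)
    have hd2 : ((Nat.gcd m 2 : ℕ):ℤ) ∣ (2:ℤ) := by exact_mod_cast Nat.gcd_dvd_right m 2
    have hdK : ((Nat.gcd m 2 : ℕ):ℤ) ∣ K := by rw [hK]; exact dvd_add hdm hd2
    rw [hA]; exact dvd_sub (hd2.mul_right b) (hdK.mul_right a)
  have hdB : ((Nat.gcd m 2 : ℕ):ℤ) ∣ B := by
    have hdm : ((Nat.gcd m 2 : ℕ):ℤ) ∣ (m:ℤ) := Int.natCast_dvd_natCast.2 (Nat.gcd_dvd_left m 2)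
    have hd2 : ((Nat.gcd m 2 : ℕ):ℤ) ∣ (2:ℤ) := by exact_mod_cast Nat.gcd_dvd_right m 2
    have hdK : ((Nat.gcd m 2 : ℕ):ℤ) ∣ K := by rw [hK]; exact dvd_add hdm hd2
    rw [hB]; exact dvd_sub (hdK.mul_right b) (hd2.mul_right a)
  have hdγ : Nat.gcd m 2 ∣ γ := by
    have := Int.dvd_gcd hdA hdB
    exact_mod_cast this
  have hγd : γ = Nat.gcd m 2 := by
    rcases Nat.even_or_odd m with he | ho
    · -- m even : gcd m 2 = 2, γ = 2
      obtain ⟨r, hr⟩ := he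
      have hm2 : m = 2 * r := by omega
      have hd2 : Nat.gcd m 2 = 2 := by
        rw [Nat.gcd_comm]; exact Nat.gcd_eq_left ⟨r, hm2⟩
      rw [hd2]
      rw [hd2] at hdγ
      have hγne4 : γ ≠ 4 := by
        intro hγ4e
        rw [hγ4e] at hγA hγB
        have h4A : (4:ℤ) ∣ A := by exact_mod_cast hγA
        have h4B : (4:ℤ) ∣ B := by exact_mod_cast hγB
        obtain ⟨A₀, hA0⟩ := h4A
        obtain ⟨B₀, hB0⟩ := h4B
        have pa := hpar ⟨r, hm2⟩ t
        have pb := hpar ⟨r, hm2⟩ (t+1)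
        rcases Nat.even_or_odd r with hre | hro
        · -- m ≡ 0 mod 4
          obtain ⟨j, hj⟩ := hre
          have hKj : K = 4*(j:ℤ) + 2 := by rw [hK, hm2]; push_cast; omega
          have heq : 16 * B₀^2 = 4 + 16 * ((j*(j+1))*b^2) := by
            linear_combination pB - (B + 4*B₀) * hB0 + ((K + 4*(j:ℤ)+2)*b^2) * hKj
          obtain ⟨X, Y, hXY⟩ : ∃ X Y : ℤ, 16*X = 4 + 16*Y := ⟨B₀^2, (j*(j+1))*b^2, heq⟩
          omega
        · -- m ≡ 2 mod 4
          obtain ⟨j, hj⟩ := hro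
          have hKj : K = 4*(j:ℤ) + 4 := by rw [hK, hm2]; push_cast; omega
          rcases Int.even_or_odd b with hbe | hbo
          · obtain ⟨b₁, hb₁'⟩ := hbe
            have hb₁ : b = 2 * b₁ := by omega
            have heq : 16 * B₀^2 = 4 + 16 * ((4*j^2+8*j+3)*b₁^2) := by
              linear_combination pB - (B + 4*B₀) * hB0 + ((K + 4*(j:ℤ)+4)*b^2) * hKj
                + (((4*(j:ℤ)+4)^2 - 4) * (b + 2*b₁)) * hb₁
            obtain ⟨X, Y, hXY⟩ : ∃ X Y : ℤ, 16*X = 4 + 16*Y := ⟨B₀^2, _, heq⟩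
            omega
          · -- b odd, so a even
            obtain ⟨v, hv⟩ := hbo
            obtain ⟨w₁, hw₁⟩ := pa
            obtain ⟨w₂, hw₂⟩ := pb
            have ha2 : ∃ a₁, a = 2 * a₁ := ⟨a / 2, by push_cast at hw₁ hw₂; omega⟩
            obtain ⟨a₁, ha₁⟩ := ha2
            have heq : 16 * A₀^2 = 4 + 16 * ((4*j^2+8*j+3)*a₁^2) := by
              linear_combination pA - (A + 4*A₀) * hA0 + ((K + 4*(j:ℤ)+4)*a^2) * hKj
                + (((4*(j:ℤ)+4)^2 - 4) * (a + 2*a₁)) * ha₁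
            obtain ⟨X, Y, hXY⟩ : ∃ X Y : ℤ, 16*X = 4 + 16*Y := ⟨A₀^2, _, heq⟩
            omega
      have hγ0 : γ ≠ 0 := by
        intro h; rw [h] at hγ4; norm_num at hγ4
      have hγle := Nat.le_of_dvd (by norm_num) hγ4
      interval_cases γ <;> first | rfl | omega
    · -- m odd : gcd m 2 = 1, γ = 1
      have hmod : m % 2 = 1 := Nat.odd_iff.1 ho
      have hd1 : Nat.gcd m 2 = 1 := by
        rw [Nat.gcd_comm, Nat.gcd_rec]
        simp [hmod]
      rw [hd1]
      have hn2 : ¬ 2 ∣ γ := by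
        intro h2γ
        have h2A : (2:ℤ) ∣ A := dvd_trans (by exact_mod_cast h2γ) hγA
        have h2B : (2:ℤ) ∣ B := dvd_trans (by exact_mod_cast h2γ) hγB
        obtain ⟨r, hr⟩ := ho
        have hndD : ¬ (2:ℤ) ∣ (K^2 - 4) := by
          have hodd : Odd (K^2 - 4) :=
            ⟨2*(r:ℤ)^2 + 6*r + 2, by rw [hK, hr]; push_cast; ring⟩
          intro hdvd
          exact (Int.not_even_iff_odd.2 hodd) (even_iff_two_dvd.2 hdvd)
        have h2b : (2:ℤ) ∣ b := by
          have hd : (2:ℤ) ∣ (K^2-4) * b := by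
            have hrel : K*B - 2*A = (K^2-4)*b := by rw [hA, hB]; ring
            rw [← hrel]
            exact dvd_sub (h2B.mul_left K) (h2A.mul_left 2)
          rcases (Int.prime_two.dvd_mul.1 hd) with h | h
          · exact absurd h hndD
          · exact h
        have h2a : (2:ℤ) ∣ a := by
          have hd : (2:ℤ) ∣ (K^2-4) * a := by
            have hrel : 2*B - K*A = (K^2-4)*a := by rw [hA, hB]; ring
            rw [← hrel]
            exact dvd_sub (h2B.mul_left 2) (h2A.mul_left K)
          rcases (Int.prime_two.dvd_mul.1 hd) with h | h
          · exact absurd h hndD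
          · exact h
        have := hco 2 h2a h2b
        norm_num at this
      have hγ0 : γ ≠ 0 := by
        intro h; rw [h] at hγ4; norm_num at hγ4
      have hγle := Nat.le_of_dvd (by norm_num) hγ4
      interval_cases γ <;> first | rfl | omega
  refine ⟨?_, ?_⟩
  · rw [fE1, fE2, fE3]
    rw [Int.gcd_mul_left]
    have hγA' : (γ:ℤ) ∣ A' := by
      rw [relE3]; exact dvd_sub (hγB.mul_left K) hγA
    have hbnn : (0:ℤ) ≤ b := by linarith
    have hdvd : ((b.natAbs * γ : ℕ) : ℤ) ∣ b * A' := by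
      push_cast [Int.natCast_natAbs]
      rw [abs_of_nonneg hbnn]
      exact mul_dvd_mul_left b hγA'
    rw [← hγ, Int.gcd_eq_left (by positivity) hdvd]
    rw [hγd]
    push_cast [Int.natCast_natAbs]
    rw [abs_of_nonneg hbnn]
    ring
  · rw [Matrix.det_fin_two_of, fE1, fE2, fE3]
    rw [hA, hA', hB]
    linear_combination ((b^2*(K*(2*b-K*a) + (K^2-4)*a)) * h1) - ((b^2*(K^2-4)) * h2)
      + (((K + (m:ℤ) + 2)*b^2) * hK)
end

section
/- Let n = 2s+1 and B = [[n, τ_{n-1}, τ_n],[0, τ_n - τ_{n-1}, τ_{n+1} - τ_n],[0, u_n, u_{n+1} - 1]]. Then the gcd of all entries of B equals gcd(n, g_s), where g_s = τ_s + τ_{s+1}. -/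
private lemma uadd_aux (m : ℕ) (u : ℕ → ℤ) (hu0 : u 0 = 0) (hu1 : u 1 = 1)
    (hA : ∀ p : ℕ, u (p + 2) = ((m : ℤ) + 2) * u (p + 1) - u p) :
    ∀ q p : ℕ, u (p + q + 1) = u (p + 1) * u (q + 1) - u p * u q := by
  have u2 : u 2 = (m : ℤ) + 2 := by simpa [hu0, hu1] using hA 0
  have H : ∀ q : ℕ, (∀ p, u (p + q + 1) = u (p + 1) * u (q + 1) - u p * u q) ∧
      (∀ p, u (p + (q + 1) + 1) = u (p + 1) * u ((q + 1) + 1) - u p * u (q + 1)) := by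
    intro q
    induction q with
    | zero =>
      constructor
      · intro p; simp [hu0, hu1]
      · intro p
        rw [show p + (0 + 1) + 1 = p + 2 from by omega, hA p,
          show (0 + 1) + 1 = 2 from by omega, show (0:ℕ) + 1 = 1 from by omega, u2, hu1]
        ring
    | succ q ih =>
      refine ⟨ih.2, ?_⟩
      intro p
      have i1 := ih.1 p
      have i2 := ih.2 p
      rw [show p + (q + 1) + 1 = (p + q + 1) + 1 from by omega,
        show q + 1 + 1 = q + 2 from by omega, hA q] at i2
      rw [show p + (q + 1 + 1) + 1 = (p + q + 1) + 2 from by omega, hA (p + q + 1),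
        show (q + 1 + 1) + 1 = (q + 1) + 2 from by omega, hA (q + 1),
        show q + 1 + 1 = q + 2 from by omega, hA q]
      linear_combination ((m : ℤ) + 2) * i2 - i1
  exact fun q p => (H q).1 p

private lemma uinv_aux (m : ℕ) (u : ℕ → ℤ) (hu0 : u 0 = 0) (hu1 : u 1 = 1)
    (hA : ∀ p : ℕ, u (p + 2) = ((m : ℤ) + 2) * u (p + 1) - u p) :
    ∀ p : ℕ, u (p + 1) ^ 2 + u p ^ 2 - ((m : ℤ) + 2) * u p * u (p + 1) = 1 := by
  intro p
  induction p with
  | zero => simp [hu0, hu1]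
  | succ p ih =>
    rw [show p + 1 + 1 = p + 2 from by omega, hA p]
    linear_combination ih

/-- For `n = 2s+1`, the gcd of all entries of
`B = [[n, τ (n-1), τ n],[0, τ n - τ (n-1), τ (n+1) - τ n],[0, u n, u (n+1) - 1]]`
equals `gcd (n, g_s)` where `g_s = τ s + τ (s+1)`. -/
theorem stmt15 (m s : ℕ) (hm : 1 ≤ m) (hs : 1 ≤ s) (n : ℕ) (hn : n = 2 * s + 1)
    (u τ : ℕ → ℤ)
    (hu0 : u 0 = 0) (hu1 : u 1 = 1)
    (hurec : ∀ p, 2 ≤ p → u p = (m + 2) * u (p - 1) - u (p - 2))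
    (hτ : ∀ p : ℕ, (m : ℤ) * τ p = (p : ℤ) - u p) :
    Int.gcd (Int.gcd (Int.gcd (Int.gcd (Int.gcd (Int.gcd (Int.gcd (Int.gcd
        ((n : ℤ)) (τ (n - 1))) (τ n)) 0) (τ n - τ (n - 1))) (τ (n + 1) - τ n)) 0)
        (u n)) (u (n + 1) - 1)
      = Int.gcd (n : ℤ) (τ s + τ (s + 1)) := by
  subst hn
  have h0 : (m : ℤ) ≠ 0 := by exact_mod_cast Nat.one_le_iff_ne_zero.mp hm
  have hA : ∀ p : ℕ, u (p + 2) = ((m : ℤ) + 2) * u (p + 1) - u p := by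
    intro p
    have h := hurec (p + 2) (by omega)
    rw [show p + 2 - 1 = p + 1 from by omega, show p + 2 - 2 = p from by omega] at h
    exact h
  have huadd := uadd_aux m u hu0 hu1 hA
  have R3 := uinv_aux m u hu0 hu1 hA s
  -- sequence values at 2s, 2s+1
  have hun : u (2 * s + 1) = u (s + 1) * u (s + 1) - u s * u s := by
    rw [show 2 * s + 1 = s + s + 1 from by omega]; exact huadd s s
  have hAs : u (s + 1) = ((m : ℤ) + 2) * u s - u (s - 1) := by
    have h := hA (s - 1)
    rw [show s - 1 + 2 = s + 1 from by omega, show s - 1 + 1 = s from by omega] at h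
    exact h
  have hu2s : u (2 * s) = u (s + 1) * u s - u s * u (s - 1) := by
    rw [show 2 * s = s + (s - 1) + 1 from by omega]
    have h := huadd (s - 1) s
    rw [show s - 1 + 1 = s from by omega] at h
    exact h
  -- τ facts with casts pushed
  have ht : (m : ℤ) * τ s = (s : ℤ) - u s := hτ s
  have hT : (m : ℤ) * τ (s + 1) = ((s : ℤ) + 1) - u (s + 1) := by
    have := hτ (s + 1); push_cast at this; exact this
  have hτ0 : (m : ℤ) * τ (2 * s) = 2 * (s : ℤ) - u (2 * s) := by
    have := hτ (2 * s); push_cast at this; exact this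
  have hτ1 : (m : ℤ) * τ (2 * s + 1) = 2 * (s : ℤ) + 1 - u (2 * s + 1) := by
    have := hτ (2 * s + 1); push_cast at this; exact this
  have hτ2 : (m : ℤ) * τ (2 * s + 2) = 2 * (s : ℤ) + 2 - u (2 * s + 2) := by
    have := hτ (2 * s + 2); push_cast at this; exact this
  have hA2s := hA (2 * s)
  -- exact identities
  have HX : τ (2 * s + 1)
      = (2 * (s : ℤ) + 1) * (τ (s + 1) - τ s) + (u (s + 1) - u s) * (τ s + τ (s + 1)) := by
    apply mul_left_cancel₀ h0
    linear_combination hτ1 - hun + (2 * (s : ℤ) + 1 - u (s + 1) + u s) * ht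
      + (-(2 * (s : ℤ) + 1) - u (s + 1) + u s) * hT
  have HY : τ (2 * s + 1) - τ (2 * s)
      = (m : ℤ) * u s * (τ s + τ (s + 1)) - (2 * (s : ℤ) + 1) * u s := by
    apply mul_left_cancel₀ h0
    linear_combination hτ1 - hτ0 - (m : ℤ) * u s * ht - (m : ℤ) * u s * hT
      - hun + hu2s - u s * hAs - R3
  have HE5 : τ (2 * s + 2) - τ (2 * s + 1) = (τ (2 * s + 1) - τ (2 * s)) - u (2 * s + 1) := by
    apply mul_left_cancel₀ h0
    linear_combination hτ2 - 2 * hτ1 + hτ0 - hA2s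
  have HE7 : u (2 * s + 2) - 1
      = ((m : ℤ) + 1) * u (2 * s + 1) - (m : ℤ) * (τ (2 * s + 1) - τ (2 * s)) := by
    linear_combination hA2s + hτ1 - hτ0
  have HUn : u (2 * s + 1) = (2 * (s : ℤ) + 1) - (m : ℤ) * τ (2 * s + 1) := by
    linear_combination hτ1
  -- coprimality of gcd(gcd(n, b-a), m*a) with n = 2s+1
  have hD : Int.gcd (Int.gcd (2 * (s : ℤ) + 1) (u (s + 1) - u s) : ℤ) ((m : ℤ) * u s) = 1 := by
    set D : ℕ := Int.gcd (Int.gcd (2 * (s : ℤ) + 1) (u (s + 1) - u s) : ℤ) ((m : ℤ) * u s)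
      with hDdef
    have dN : (D : ℤ) ∣ 2 * (s : ℤ) + 1 := (Int.gcd_dvd_left _ _).trans (Int.gcd_dvd_left _ _)
    have dh : (D : ℤ) ∣ u (s + 1) - u s := (Int.gcd_dvd_left _ _).trans (Int.gcd_dvd_right _ _)
    have dma : (D : ℤ) ∣ (m : ℤ) * u s := (Int.gcd_dvd_right _ _)
    have pell : 4 * (m : ℤ)
        = (m : ℤ) * ((m : ℤ) + 4) * ((u (s + 1) - u s) * (u (s + 1) - u s))
          - (2 * ((m : ℤ) * u s) + (m : ℤ) * (u (s + 1) - u s))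
            * (2 * ((m : ℤ) * u s) + (m : ℤ) * (u (s + 1) - u s)) := by
      linear_combination (-4 * (m : ℤ)) * R3
    have d4m : (D : ℤ) ∣ 4 * (m : ℤ) := by
      rw [pell]
      exact dvd_sub ((dh.mul_right _).mul_left _)
        ((dvd_add (dma.mul_left 2) (dh.mul_left (m : ℤ))).mul_right _)
    have d4mN : D ∣ 4 * m := by
      have h4 : (4 * (m : ℤ)) = ((4 * m : ℕ) : ℤ) := by push_cast; ring
      rw [h4] at d4m
      exact_mod_cast d4m
    have dNn : D ∣ 2 * s + 1 := by
      have hN : (2 * (s : ℤ) + 1) = ((2 * s + 1 : ℕ) : ℤ) := by push_cast; ring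
      rw [hN] at dN
      exact_mod_cast dN
    have hDodd : ¬ 2 ∣ D := by
      intro h2
      have : (2 : ℕ) ∣ 2 * s + 1 := h2.trans dNn
      omega
    have hcop : Nat.Coprime D 4 := by
      have h2 : Nat.Coprime D 2 := Nat.coprime_two_right.mpr (Nat.odd_iff.mpr (by omega))
      simpa using h2.pow_right 2
    have dm : D ∣ m := hcop.dvd_of_dvd_mul_left d4mN
    have dmZ : (D : ℤ) ∣ (m : ℤ) := Int.natCast_dvd_natCast.mpr dm
    have key : (1 : ℤ) = (u (s + 1) - u s) * (u (s + 1) - u s) - (m : ℤ) * (u s * u (s + 1)) := by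
      linear_combination -R3
    have done1 : (D : ℤ) ∣ 1 := by
      rw [key]
      exact dvd_sub (dh.mul_right _) (dmZ.mul_right _)
    have : D ∣ 1 := by exact_mod_cast done1
    exact Nat.dvd_one.mp this
  -- normalize the goal
  simp only [show 2 * s + 1 - 1 = 2 * s from by omega, show 2 * s + 1 + 1 = 2 * s + 2 from by omega]
  push_cast
  refine Nat.dvd_antisymm ?_ ?_
  · -- L ∣ gcd(n, g)
    apply Int.natCast_dvd_natCast.mp
    have hL_N : (↑(Int.gcd (Int.gcd (Int.gcd (Int.gcd (Int.gcd (Int.gcd (Int.gcd (Int.gcd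
        (2 * (s : ℤ) + 1) (τ (2 * s))) (τ (2 * s + 1))) 0) (τ (2 * s + 1) - τ (2 * s)))
        (τ (2 * s + 2) - τ (2 * s + 1))) 0) (u (2 * s + 1))) (u (2 * s + 2) - 1)) : ℤ)
        ∣ 2 * (s : ℤ) + 1 :=
      (Int.gcd_dvd_left _ _).trans ((Int.gcd_dvd_left _ _).trans ((Int.gcd_dvd_left _ _).trans
        ((Int.gcd_dvd_left _ _).trans ((Int.gcd_dvd_left _ _).trans ((Int.gcd_dvd_left _ _).trans
        ((Int.gcd_dvd_left _ _).trans (Int.gcd_dvd_left _ _)))))))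
    have hL_X : (↑(Int.gcd (Int.gcd (Int.gcd (Int.gcd (Int.gcd (Int.gcd (Int.gcd (Int.gcd
        (2 * (s : ℤ) + 1) (τ (2 * s))) (τ (2 * s + 1))) 0) (τ (2 * s + 1) - τ (2 * s)))
        (τ (2 * s + 2) - τ (2 * s + 1))) 0) (u (2 * s + 1))) (u (2 * s + 2) - 1)) : ℤ)
        ∣ τ (2 * s + 1) :=
      (Int.gcd_dvd_left _ _).trans ((Int.gcd_dvd_left _ _).trans ((Int.gcd_dvd_left _ _).trans
        ((Int.gcd_dvd_left _ _).trans ((Int.gcd_dvd_left _ _).trans ((Int.gcd_dvd_left _ _).trans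
        (Int.gcd_dvd_right _ _))))))
    have hL_XZ : (↑(Int.gcd (Int.gcd (Int.gcd (Int.gcd (Int.gcd (Int.gcd (Int.gcd (Int.gcd
        (2 * (s : ℤ) + 1) (τ (2 * s))) (τ (2 * s + 1))) 0) (τ (2 * s + 1) - τ (2 * s)))
        (τ (2 * s + 2) - τ (2 * s + 1))) 0) (u (2 * s + 1))) (u (2 * s + 2) - 1)) : ℤ)
        ∣ τ (2 * s + 1) - τ (2 * s) :=
      (Int.gcd_dvd_left _ _).trans ((Int.gcd_dvd_left _ _).trans ((Int.gcd_dvd_left _ _).trans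
        ((Int.gcd_dvd_left _ _).trans (Int.gcd_dvd_right _ _))))
    set L : ℕ := Int.gcd (Int.gcd (Int.gcd (Int.gcd (Int.gcd (Int.gcd (Int.gcd (Int.gcd
        (2 * (s : ℤ) + 1) (τ (2 * s))) (τ (2 * s + 1))) 0) (τ (2 * s + 1) - τ (2 * s)))
        (τ (2 * s + 2) - τ (2 * s + 1))) 0) (u (2 * s + 1))) (u (2 * s + 2) - 1) with hLdef
    have hLhg : (L : ℤ) ∣ (u (s + 1) - u s) * (τ s + τ (s + 1)) := by
      have e : (u (s + 1) - u s) * (τ s + τ (s + 1))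
          = τ (2 * s + 1) - (2 * (s : ℤ) + 1) * (τ (s + 1) - τ s) := by linear_combination -HX
      rw [e]
      exact dvd_sub hL_X (hL_N.mul_right _)
    have hLmag : (L : ℤ) ∣ ((m : ℤ) * u s) * (τ s + τ (s + 1)) := by
      have e : ((m : ℤ) * u s) * (τ s + τ (s + 1))
          = (τ (2 * s + 1) - τ (2 * s)) + (2 * (s : ℤ) + 1) * u s := by linear_combination -HY
      rw [e]
      exact dvd_add hL_XZ (hL_N.mul_right _)
    have hLng : (L : ℤ) ∣ (2 * (s : ℤ) + 1) * (τ s + τ (s + 1)) := hL_N.mul_right _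
    -- Bezout
    have hbez1 : (↑(Int.gcd (2 * (s : ℤ) + 1) (u (s + 1) - u s)) : ℤ)
        = (2 * (s : ℤ) + 1) * Int.gcdA (2 * (s : ℤ) + 1) (u (s + 1) - u s)
          + (u (s + 1) - u s) * Int.gcdB (2 * (s : ℤ) + 1) (u (s + 1) - u s) :=
      Int.gcd_eq_gcd_ab _ _
    have hbez2 : (1 : ℤ)
        = (↑(Int.gcd (2 * (s : ℤ) + 1) (u (s + 1) - u s)) : ℤ)
            * Int.gcdA (↑(Int.gcd (2 * (s : ℤ) + 1) (u (s + 1) - u s)) : ℤ) ((m : ℤ) * u s)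
          + ((m : ℤ) * u s)
            * Int.gcdB (↑(Int.gcd (2 * (s : ℤ) + 1) (u (s + 1) - u s)) : ℤ) ((m : ℤ) * u s) := by
      have h := Int.gcd_eq_gcd_ab
        (↑(Int.gcd (2 * (s : ℤ) + 1) (u (s + 1) - u s)) : ℤ) ((m : ℤ) * u s)
      rw [hD] at h
      exact_mod_cast h
    have hLg : (L : ℤ) ∣ τ s + τ (s + 1) := by
      have key : τ s + τ (s + 1)
          = ((2 * (s : ℤ) + 1) * (τ s + τ (s + 1)))
              * (Int.gcdA (2 * (s : ℤ) + 1) (u (s + 1) - u s)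
                * Int.gcdA (↑(Int.gcd (2 * (s : ℤ) + 1) (u (s + 1) - u s)) : ℤ) ((m : ℤ) * u s))
            + ((u (s + 1) - u s) * (τ s + τ (s + 1)))
              * (Int.gcdB (2 * (s : ℤ) + 1) (u (s + 1) - u s)
                * Int.gcdA (↑(Int.gcd (2 * (s : ℤ) + 1) (u (s + 1) - u s)) : ℤ) ((m : ℤ) * u s))
            + (((m : ℤ) * u s) * (τ s + τ (s + 1)))
              * Int.gcdB (↑(Int.gcd (2 * (s : ℤ) + 1) (u (s + 1) - u s)) : ℤ) ((m : ℤ) * u s) := by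
        linear_combination (τ s + τ (s + 1)) * hbez2
          + (τ s + τ (s + 1))
            * Int.gcdA (↑(Int.gcd (2 * (s : ℤ) + 1) (u (s + 1) - u s)) : ℤ) ((m : ℤ) * u s)
            * hbez1
      rw [key]
      exact dvd_add (dvd_add (hLng.mul_right _) (hLhg.mul_right _)) (hLmag.mul_right _)
    exact Int.dvd_coe_gcd hL_N hLg
  · -- gcd(n, g) ∣ L
    apply Int.natCast_dvd_natCast.mp
    have hR_N : (↑(Int.gcd (2 * (s : ℤ) + 1) (τ s + τ (s + 1))) : ℤ) ∣ 2 * (s : ℤ) + 1 :=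
      (Int.gcd_dvd_left _ _)
    have hR_g : (↑(Int.gcd (2 * (s : ℤ) + 1) (τ s + τ (s + 1))) : ℤ) ∣ τ s + τ (s + 1) :=
      (Int.gcd_dvd_right _ _)
    set R : ℕ := Int.gcd (2 * (s : ℤ) + 1) (τ s + τ (s + 1)) with hRdef
    have hX : (R : ℤ) ∣ τ (2 * s + 1) := by
      rw [HX]
      exact dvd_add (hR_N.mul_right _) (hR_g.mul_left _)
    have hXZ : (R : ℤ) ∣ τ (2 * s + 1) - τ (2 * s) := by
      rw [HY]
      exact dvd_sub (hR_g.mul_left _) (hR_N.mul_right _)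
    have hZ : (R : ℤ) ∣ τ (2 * s) := by
      have e : τ (2 * s) = τ (2 * s + 1) - (τ (2 * s + 1) - τ (2 * s)) := by ring
      rw [e]; exact dvd_sub hX hXZ
    have hU : (R : ℤ) ∣ u (2 * s + 1) := by
      rw [HUn]; exact dvd_sub hR_N (hX.mul_left _)
    have hWX : (R : ℤ) ∣ τ (2 * s + 2) - τ (2 * s + 1) := by
      rw [HE5]; exact dvd_sub hXZ hU
    have hV1 : (R : ℤ) ∣ u (2 * s + 2) - 1 := by
      rw [HE7]; exact dvd_sub (hU.mul_left _) (hXZ.mul_left _)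
    exact Int.dvd_coe_gcd (Int.dvd_coe_gcd (Int.dvd_coe_gcd (Int.dvd_coe_gcd (Int.dvd_coe_gcd (Int.dvd_coe_gcd
      (Int.dvd_coe_gcd (Int.dvd_coe_gcd hR_N hZ) hX) (dvd_zero _)) hXZ) hWX) (dvd_zero _)) hU) hV1
end

section
/- Let n = 2s and B = [[n, τ_{n-1}, τ_n],[0, τ_n - τ_{n-1}, τ_{n+1} - τ_n],[0, u_n, u_{n+1} - 1]]. Then the gcd of all entries of B equals gcd(u_s, 2τ_s). -/
/-- For `n = 2s`, the gcd of all entries of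
`B = [[n, τ (n-1), τ n],[0, τ n - τ (n-1), τ (n+1) - τ n],[0, u n, u (n+1) - 1]]`
equals `gcd (u s, 2·τ s)`. -/
theorem stmt16 (m s : ℕ) (hm : 1 ≤ m) (hs : 1 ≤ s) (n : ℕ) (hn : n = 2 * s)
    (u τ : ℕ → ℤ)
    (hu0 : u 0 = 0) (hu1 : u 1 = 1)
    (hurec : ∀ p, 2 ≤ p → u p = (m + 2) * u (p - 1) - u (p - 2))
    (hτ : ∀ p : ℕ, (m : ℤ) * τ p = (p : ℤ) - u p) :
    Int.gcd (Int.gcd (Int.gcd (Int.gcd (Int.gcd (Int.gcd (Int.gcd (Int.gcd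
        ((n : ℤ)) (τ (n - 1))) (τ n)) 0) (τ n - τ (n - 1))) (τ (n + 1) - τ n)) 0)
        (u n)) (u (n + 1) - 1)
      = Int.gcd (u s) (2 * τ s) := by
  subst hn
  set c : ℤ := (m : ℤ) + 2 with hc
  have hm0 : (m : ℤ) ≠ 0 := by positivity
  have hrec : ∀ k : ℕ, u (k + 2) = c * u (k + 1) - u k := by
    intro k
    have h := hurec (k + 2) (by omega)
    have e1 : k + 2 - 1 = k + 1 := by omega
    have e2 : k + 2 - 2 = k := by omega
    rw [e1, e2] at h
    rw [h, hc]
  have hinv : ∀ p : ℕ, u (p + 1) ^ 2 - c * u p * u (p + 1) + u p ^ 2 = 1 := by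
    intro p
    induction p with
    | zero => simp [hu0, hu1]
    | succ q ih =>
      rw [hrec q]
      linear_combination ih
  have hadd : ∀ k : ℕ, u (s + k + 1) = u (k + 1) * u (s + 1) - u k * u s ∧
      u (s + k + 2) = u (k + 2) * u (s + 1) - u (k + 1) * u s := by
    intro k
    induction k with
    | zero =>
      refine ⟨by simp [hu0, hu1], ?_⟩
      rw [hrec s, hrec 0]
      simp [hu0, hu1]
    | succ q ih =>
      obtain ⟨h1, h2⟩ := ih
      refine ⟨h2, ?_⟩
      have h3 := hrec (s + q + 1)
      have h4 := hrec (q + 1)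
      show u (s + q + 1 + 2) = u (q + 1 + 2) * u (s + 1) - u (q + 2) * u s
      rw [h3, h4]
      linear_combination c * h2 - h1 + u s * hrec q
  set a := u s with ha
  set x := u (s + 1) with hx
  have hIs : x ^ 2 - c * a * x + a ^ 2 = 1 := hinv s
  have hus1 : u (s - 1) = c * a - x := by
    have h := hrec (s - 1)
    have e1 : s - 1 + 1 = s := by omega
    have e2 : s - 1 + 2 = s + 1 := by omega
    rw [e1, e2] at h
    linarith [h]
  have hun : u (2 * s) = a * (2 * x - c * a) := by
    have h := (hadd (s - 1)).1
    have e : s + (s - 1) + 1 = 2 * s := by omega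
    have e1 : s - 1 + 1 = s := by omega
    rw [e, e1] at h
    rw [h, hus1]; ring
  have hun1 : u (2 * s + 1) = x ^ 2 - a ^ 2 := by
    have h := (hadd s).1
    have e : s + s + 1 = 2 * s + 1 := by omega
    rw [e] at h
    rw [h]; ring
  have hun1b : u (2 * s + 1) - 1 = a * (c * x - 2 * a) := by
    rw [hun1]; linear_combination hIs
  -- cast lemmas
  have hc2s : ((2 * s : ℕ) : ℤ) = 2 * (s : ℤ) := by push_cast; ring
  have hcs1 : ((s - 1 : ℕ) : ℤ) = (s : ℤ) - 1 := by omega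
  have hc2s1 : ((2 * s - 1 : ℕ) : ℤ) = 2 * (s : ℤ) - 1 := by omega
  -- τ identities
  have h1 := hτ (2 * s); rw [hc2s, hun] at h1
  have h2 := hτ s
  have h3 := hτ (s + 1); push_cast at h3
  have h4 := hτ (s - 1); rw [hcs1, hus1] at h4
  have h5 := hτ (2 * s + 1); push_cast at h5; rw [hun1] at h5
  have hτn : τ (2 * s) = 2 * τ s + a * (τ (s + 1) - τ (s - 1)) := by
    apply mul_left_cancel₀ hm0
    linear_combination h1 - 2 * h2 - a * h3 + a * h4
  have hdτ : τ (2 * s + 1) - τ (2 * s) = -(a * (x + a)) := by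
    apply mul_left_cancel₀ hm0
    have : (m : ℤ) = c - 2 := by rw [hc]; ring
    linear_combination h5 - h1 - hIs + (a * (x + a)) * this
  have hτm1 : τ (2 * s - 1) = c * τ (2 * s) - τ (2 * s + 1) - 2 * (s : ℤ) := by
    have h6 := hτ (2 * s - 1); rw [hc2s1] at h6
    have h7 := hrec (2 * s - 1)
    have e1 : 2 * s - 1 + 1 = 2 * s := by omega
    have e2 : 2 * s - 1 + 2 = 2 * s + 1 := by omega
    rw [e1, e2] at h7
    have h1' := hτ (2 * s); rw [hc2s] at h1'
    apply mul_left_cancel₀ hm0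
    have hmc : (m : ℤ) = c - 2 := by rw [hc]; ring
    linear_combination h6 - h7 - c * h1' + h5 - 2 * (s : ℤ) * hmc + hun1
  -- the nested gcd
  set D : ℕ := Int.gcd (Int.gcd (Int.gcd (Int.gcd (Int.gcd (Int.gcd (Int.gcd (Int.gcd
      ((2 * s : ℕ) : ℤ) (τ (2 * s - 1))) (τ (2 * s))) 0) (τ (2 * s) - τ (2 * s - 1)))
      (τ (2 * s + 1) - τ (2 * s))) 0) (u (2 * s))) (u (2 * s + 1) - 1) with hD
  set g : ℕ := Int.gcd a (2 * τ s) with hg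
  -- direction 1 : g divides everything
  have hga : (g : ℤ) ∣ a := Int.gcd_dvd_left _ _
  have hgt : (g : ℤ) ∣ 2 * τ s := Int.gcd_dvd_right _ _
  have hgn : (g : ℤ) ∣ ((2 * s : ℕ) : ℤ) := by
    have : ((2 * s : ℕ) : ℤ) = (m : ℤ) * (2 * τ s) + 2 * a := by
      rw [hc2s]; linarith [h2]
    rw [this]
    exact dvd_add (hgt.mul_left _) (hga.mul_left _)
  have hgτn : (g : ℤ) ∣ τ (2 * s) := by
    rw [hτn]; exact dvd_add hgt (hga.mul_right _)
  have hgdτ : (g : ℤ) ∣ τ (2 * s + 1) - τ (2 * s) := by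
    rw [hdτ]; exact dvd_neg.mpr (hga.mul_right _)
  have hgτn1 : (g : ℤ) ∣ τ (2 * s + 1) := by
    have : τ (2 * s + 1) = (τ (2 * s + 1) - τ (2 * s)) + τ (2 * s) := by ring
    rw [this]; exact dvd_add hgdτ hgτn
  have hgτm1 : (g : ℤ) ∣ τ (2 * s - 1) := by
    rw [hτm1]
    refine dvd_sub (dvd_sub (hgτn.mul_left _) hgτn1) ?_
    have : 2 * (s : ℤ) = ((2 * s : ℕ) : ℤ) := hc2s.symm
    rw [this]; exact hgn
  have hgun : (g : ℤ) ∣ u (2 * s) := by rw [hun]; exact hga.mul_right _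
  have hgun1 : (g : ℤ) ∣ u (2 * s + 1) - 1 := by rw [hun1b]; exact hga.mul_right _
  have hgD : (g : ℤ) ∣ (D : ℤ) := by
    rw [hD]
    exact Int.dvd_coe_gcd (Int.dvd_coe_gcd (Int.dvd_coe_gcd (Int.dvd_coe_gcd (Int.dvd_coe_gcd
      (Int.dvd_coe_gcd (Int.dvd_coe_gcd (Int.dvd_coe_gcd hgn hgτm1) hgτn) (dvd_zero _))
      (dvd_sub hgτn hgτm1)) hgdτ) (dvd_zero _)) hgun) hgun1
  -- direction 2 : D divides u s and 2 * τ s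
  have hD8 : (D : ℤ) ∣ u (2 * s + 1) - 1 := Int.gcd_dvd_right _ _
  have hD7' : (D : ℤ) ∣ (Int.gcd (Int.gcd (Int.gcd (Int.gcd (Int.gcd (Int.gcd (Int.gcd
      ((2 * s : ℕ) : ℤ) (τ (2 * s - 1))) (τ (2 * s))) 0) (τ (2 * s) - τ (2 * s - 1)))
      (τ (2 * s + 1) - τ (2 * s))) 0) (u (2 * s)) : ℤ) := Int.gcd_dvd_left _ _
  have hDun : (D : ℤ) ∣ u (2 * s) := hD7'.trans (Int.gcd_dvd_right _ _)
  have hD6' := hD7'.trans (Int.gcd_dvd_left _ (u (2 * s)))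
  have hD5' := hD6'.trans (Int.gcd_dvd_left _ (0 : ℤ))
  have hDdτ : (D : ℤ) ∣ τ (2 * s + 1) - τ (2 * s) := hD5'.trans (Int.gcd_dvd_right _ _)
  have hD4' := hD5'.trans (Int.gcd_dvd_left _ (τ (2 * s + 1) - τ (2 * s)))
  have hD3' := hD4'.trans (Int.gcd_dvd_left _ (τ (2 * s) - τ (2 * s - 1)))
  have hD2' := hD3'.trans (Int.gcd_dvd_left _ (0 : ℤ))
  have hDτn : (D : ℤ) ∣ τ (2 * s) := hD2'.trans (Int.gcd_dvd_right _ _)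
  have h2a : (D : ℤ) ∣ 2 * a := by
    have key : 2 * a = x * u (2 * s) - a * (u (2 * s + 1) - 1) := by
      rw [hun, hun1b]; linear_combination (-2) * a * hIs
    rw [key]; exact dvd_sub (hDun.mul_left _) (hD8.mul_left _)
  have hax : (D : ℤ) ∣ a * (x + a) := by
    have key : a * (x + a) = -(τ (2 * s + 1) - τ (2 * s)) := by rw [hdτ]; ring
    rw [key]; exact dvd_neg.mpr hDdτ
  have hDa : (D : ℤ) ∣ a := by
    have key : a = (x + a) * (a * (x + a)) - a * (u (2 * s + 1) - 1)
        - (a * a + a * x) * (2 * a) := by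
      rw [hun1b]; linear_combination (-a) * hIs
    rw [key]
    exact dvd_sub (dvd_sub (hax.mul_left _) (hD8.mul_left _)) (h2a.mul_left _)
  have hD2t : (D : ℤ) ∣ 2 * τ s := by
    have key : 2 * τ s = τ (2 * s) - a * (τ (s + 1) - τ (s - 1)) := by
      rw [hτn]; ring
    rw [key]; exact dvd_sub hDτn (hDa.mul_right _)
  have hDg : (D : ℤ) ∣ (g : ℤ) := by rw [hg]; exact Int.dvd_coe_gcd hDa hD2t
  exact Nat.dvd_antisymm (Int.natCast_dvd_natCast.mp hDg) (Int.natCast_dvd_natCast.mp hgD)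
end

section
/- Let B = [[n, τ_{n-1}, τ_n],[0, τ_n - τ_{n-1}, τ_{n+1} - τ_n],[0, u_n, u_{n+1} - 1]]. Then det B = (n/m)·(v_n - 2). In particular, det B = n·h_s² when n = 2s+1 and det B = n(m+4)u_s² when n = 2s, where h_s = u_s + u_{s+1}. -/
/-- `det B = (n/m)·(v n - 2)` for
`B = [[n, τ (n-1), τ n],[0, τ n - τ (n-1), τ (n+1) - τ n],[0, u n, u (n+1) - 1]]`;
in particular `det B = n·(u s + u (s+1))²` when `n = 2s+1`, and
`det B = n·(m+4)·(u s)²` when `n = 2s`. -/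
theorem stmt17 (m n : ℕ) (hm : 1 ≤ m) (hn : 2 ≤ n) (u v τ : ℕ → ℤ)
    (hu0 : u 0 = 0) (hu1 : u 1 = 1)
    (hurec : ∀ p, 2 ≤ p → u p = (m + 2) * u (p - 1) - u (p - 2))
    (hv0 : v 0 = 2) (hv1 : v 1 = m + 2)
    (hvrec : ∀ p, 2 ≤ p → v p = (m + 2) * v (p - 1) - v (p - 2))
    (hτ : ∀ p : ℕ, (m : ℤ) * τ p = (p : ℤ) - u p) :
    (m : ℤ) * (!![(n : ℤ), τ (n - 1), τ n;
        0, τ n - τ (n - 1), τ (n + 1) - τ n;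
        0, u n, u (n + 1) - 1] : Matrix (Fin 3) (Fin 3) ℤ).det
        = n * (v n - 2) ∧
      (∀ s : ℕ, n = 2 * s + 1 →
        (!![(n : ℤ), τ (n - 1), τ n;
          0, τ n - τ (n - 1), τ (n + 1) - τ n;
          0, u n, u (n + 1) - 1] : Matrix (Fin 3) (Fin 3) ℤ).det
          = n * (u s + u (s + 1)) ^ 2) ∧
      (∀ s : ℕ, n = 2 * s →
        (!![(n : ℤ), τ (n - 1), τ n;
          0, τ n - τ (n - 1), τ (n + 1) - τ n;
          0, u n, u (n + 1) - 1] : Matrix (Fin 3) (Fin 3) ℤ).det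
          = n * (m + 4) * (u s) ^ 2) := by
  -- recurrences in convenient form
  have hu2 : ∀ p, u (p + 2) = (m + 2) * u (p + 1) - u p := by
    intro p
    have := hurec (p + 2) (by omega)
    simpa using this
  have hv2 : ∀ p, v (p + 2) = (m + 2) * v (p + 1) - v p := by
    intro p
    have := hvrec (p + 2) (by omega)
    simpa using this
  -- invariant
  have inv : ∀ p, u (p+1)^2 - (m+2) * u (p+1) * u p + u p ^ 2 = 1 := by
    intro p
    induction p with
    | zero => rw [hu0, hu1]; ring
    | succ k ih => rw [hu2 k]; linear_combination ih
  -- v in terms of u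
  have hvu : ∀ p, v p = 2 * u (p+1) - (m+2) * u p := by
    have key : ∀ p, v p = 2 * u (p+1) - (m+2) * u p ∧
        v (p+1) = 2 * u (p+2) - (m+2) * u (p+1) := by
      intro p
      induction p with
      | zero =>
        constructor
        · rw [hv0, hu0, hu1]; ring
        · rw [hv1, hu1, hu2 0, hu0, hu1]; ring
      | succ k ih =>
        refine ⟨ih.2, ?_⟩
        rw [hv2 k, hu2 (k+1), hu2 k, ih.1, ih.2, hu2 k]
        ring
    exact fun p => (key p).1
  -- doubling formulas
  have dbl : ∀ s, u (2*s) = u s * v s ∧ u (2*s+1) = u (s+1)^2 - u s ^ 2 := by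
    intro s
    induction s with
    | zero => simp [hu0, hu1]
    | succ k ih =>
      have e2 : 2 * (k+1) + 1 = (2*k+1) + 2 := by ring
      have e1 : 2 * (k+1) = (2*k) + 2 := by ring
      rw [e2, e1, hu2 (2*k+1), hu2 (2*k), ih.1, ih.2, hvu (k+1), hvu k,
        show k+1+1 = k+2 from rfl, hu2 k]
      constructor <;> ring
  -- determinant value
  have hdet : (!![(n : ℤ), τ (n - 1), τ n;
        0, τ n - τ (n - 1), τ (n + 1) - τ n;
        0, u n, u (n + 1) - 1] : Matrix (Fin 3) (Fin 3) ℤ).det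
      = n * ((τ n - τ (n-1)) * (u (n+1) - 1) - (τ (n+1) - τ n) * u n) := by
    simp [Matrix.det_fin_three, Matrix.vecHead, Matrix.vecTail]
    ring
  obtain ⟨k, rfl⟩ : ∃ k, n = k + 1 := ⟨n - 1, by omega⟩
  have hk1 : k + 1 - 1 = k := rfl
  rw [hk1] at hdet ⊢
  -- part 1
  have part1 : (m : ℤ) * (!![((k+1 : ℕ) : ℤ), τ k, τ (k+1);
        0, τ (k+1) - τ k, τ (k+1+1) - τ (k+1);
        0, u (k+1), u (k+1+1) - 1] : Matrix (Fin 3) (Fin 3) ℤ).det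
      = ((k+1 : ℕ) : ℤ) * (v (k+1) - 2) := by
    rw [hdet, hvu (k+1)]
    simp only [show k+1+1 = k+2 from rfl]
    push_cast
    linear_combination (norm := (push_cast; ring1)) (((k:ℤ)+1) * (u (k+2) - 1)) * hτ (k+1)
      - (((k:ℤ)+1) * (u (k+2) - 1)) * hτ k
      - (((k:ℤ)+1) * u (k+1)) * hτ (k+2)
      + (((k:ℤ)+1) * u (k+1)) * hτ (k+1)
      + (((k:ℤ)+1) * (u k - 1)) * hu2 k
      - ((k:ℤ)+1) * inv k
  refine ⟨part1, ?_, ?_⟩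
  · intro s hs
    have hm0 : (m : ℤ) ≠ 0 := by positivity
    apply mul_left_cancel₀ hm0
    rw [part1]
    have hdv : v (2*s+1) - 2 = (m:ℤ) * (u s + u (s+1))^2 := by
      rw [hvu (2*s+1), show 2*s+1+1 = 2*(s+1) from by ring, (dbl (s+1)).1,
        (dbl s).2, hvu (s+1), show s+1+1 = s+2 from rfl, hu2 s]
      linear_combination 2 * inv s
    rw [show k + 1 = 2 * s + 1 from hs, hdv]
    ring
  · intro s hs
    have hm0 : (m : ℤ) ≠ 0 := by positivity
    apply mul_left_cancel₀ hm0
    rw [part1]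
    have hdv : v (2*s) - 2 = (m:ℤ) * ((m:ℤ)+4) * (u s)^2 := by
      rw [hvu (2*s), (dbl s).2, (dbl s).1, hvu s]
      linear_combination 2 * inv s
    rw [show k + 1 = 2 * s from hs, hdv]
    ring
end
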